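/- arXiv:1204.5531 — 7 statements merged into one kernel-verified Lean document; each statement's English description precedes it below -/
import Mathlib

section
/- Let (f, φ) : (S₁, G₁, int₁) → (S₂, G₂, int₂) be a morphism of generalized interval systems, where S₁ is nonempty. Then the function f : S₁ → S₂ is bijective if and only if the group homomorphism φ : G₁ → G₂ is bijective. -/
/-- For a morphism (f, φ) of generalized interval systems with S₁ nonempty,
f is bijective iff φ is bijective. -/
theorem stmt_2 {S₁ S₂ G₁ G₂ : Type*} [Group G₁] [Group G₂] [Nonempty S₁]
    (int₁ : S₁ → S₁ → G₁) (int₂ : S₂ → S₂ → G₂)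
    (huniq₁ : ∀ (s : S₁) (i : G₁), ∃! t : S₁, int₁ s t = i)
    (hcomp₁ : ∀ s t u : S₁, int₁ s t * int₁ t u = int₁ s u)
    (huniq₂ : ∀ (s : S₂) (i : G₂), ∃! t : S₂, int₂ s t = i)
    (hcomp₂ : ∀ s t u : S₂, int₂ s t * int₂ t u = int₂ s u)
    (f : S₁ → S₂) (φ : G₁ →* G₂)
    (hmor : ∀ s t : S₁, int₂ (f s) (f t) = φ (int₁ s t)) :
    Function.Bijective f ↔ Function.Bijective φ := by
  obtain ⟨s₀⟩ := ‹Nonempty S₁›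
  have hα : Function.Bijective (fun t : S₁ => int₁ s₀ t) := by
    constructor
    · intro a b hab
      exact ((huniq₁ s₀ (int₁ s₀ b)).unique hab rfl)
    · intro i
      obtain ⟨t, ht, _⟩ := huniq₁ s₀ i
      exact ⟨t, ht⟩
  have hβ : Function.Bijective (fun t : S₂ => int₂ (f s₀) t) := by
    constructor
    · intro a b hab
      exact ((huniq₂ (f s₀) (int₂ (f s₀) b)).unique hab rfl)
    · intro i
      obtain ⟨t, ht, _⟩ := huniq₂ (f s₀) i
      exact ⟨t, ht⟩
  have hcomm : (fun t : S₂ => int₂ (f s₀) t) ∘ f = φ ∘ (fun t : S₁ => int₁ s₀ t) := by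
    funext t
    exact hmor s₀ t
  constructor
  · intro hf
    have h := hβ.comp hf
    rw [hcomm] at h
    have : Function.Bijective (φ ∘ fun t : S₁ => int₁ s₀ t) := h
    have hsurj : Function.Surjective φ := by
      intro i
      obtain ⟨t, ht⟩ := this.2 i
      exact ⟨int₁ s₀ t, ht⟩
    have hinj : Function.Injective φ := by
      intro a b hab
      obtain ⟨ta, hta⟩ := hα.2 a
      obtain ⟨tb, htb⟩ := hα.2 b
      have heq : (φ ∘ fun t : S₁ => int₁ s₀ t) ta = (φ ∘ fun t : S₁ => int₁ s₀ t) tb := by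
        simp only [Function.comp_apply, hta, htb, hab]
      have htab := this.1 heq
      rw [← hta, ← htb, htab]
    exact ⟨hinj, hsurj⟩
  · intro hφ
    have h : Function.Bijective ((fun t : S₂ => int₂ (f s₀) t) ∘ f) := by
      rw [hcomm]; exact hφ.comp hα
    constructor
    · intro a b hab
      exact h.1 (by simp [Function.comp_apply, hab])
    · intro y
      obtain ⟨t, ht⟩ := h.2 (int₂ (f s₀) y)
      have := hβ.1 ht
      exact ⟨t, this⟩
end

section
/- Let G, H ≤ Sym(S) be dual groups in the sense of Lewin, let G₀ be a subgroup of G, let s₀ ∈ S, and let S₀ = { g(s₀) : g ∈ G₀ }. Then H₀ := { h ∈ H : h(s₀) ∈ S₀ } is a subgroup of H, every element of H₀ preserves S₀ as a set, and H₀ acts simply transitively on S₀: for all x, y ∈ S₀ there is a unique h ∈ H₀ with h(x) = y. -/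
/-- The orbit of `s₀` under a subgroup `G₀` of the symmetric group. -/
def orbitSet {S : Type*} (G₀ : Subgroup (Equiv.Perm S)) (s₀ : S) : Set S :=
  {x | ∃ g ∈ G₀, g s₀ = x}

/-- The set H₀ of elements of H carrying s₀ into the orbit S₀ of s₀ under G₀. -/
def Hsub {S : Type*} (H G₀ : Subgroup (Equiv.Perm S)) (s₀ : S) : Set (Equiv.Perm S) :=
  {h | h ∈ H ∧ h s₀ ∈ orbitSet G₀ s₀}

/-- With G, H ≤ Sym(S) dual, G₀ ≤ G, S₀ the G₀-orbit of s₀, the set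
H₀ = { h ∈ H : h(s₀) ∈ S₀ } is a subgroup of H, preserves S₀, and acts simply
transitively on S₀. -/
theorem stmt_12 {S : Type*} (G H : Subgroup (Equiv.Perm S))
    (hGst : ∀ s t : S, ∃! g : G, (g : Equiv.Perm S) s = t)
    (hHst : ∀ s t : S, ∃! h : H, (h : Equiv.Perm S) s = t)
    (hGH : Subgroup.centralizer (G : Set (Equiv.Perm S)) = H)
    (hHG : Subgroup.centralizer (H : Set (Equiv.Perm S)) = G)
    (G₀ : Subgroup (Equiv.Perm S)) (hG₀ : G₀ ≤ G) (s₀ : S) :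
    (1 : Equiv.Perm S) ∈ Hsub H G₀ s₀ ∧
    (∀ a ∈ Hsub H G₀ s₀, ∀ b ∈ Hsub H G₀ s₀, a * b ∈ Hsub H G₀ s₀) ∧
    (∀ a ∈ Hsub H G₀ s₀, a⁻¹ ∈ Hsub H G₀ s₀) ∧
    (∀ h ∈ Hsub H G₀ s₀, ∀ x ∈ orbitSet G₀ s₀, h x ∈ orbitSet G₀ s₀) ∧
    (∀ x ∈ orbitSet G₀ s₀, ∀ y ∈ orbitSet G₀ s₀,
      ∃! h : Equiv.Perm S, h ∈ Hsub H G₀ s₀ ∧ h x = y) := by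
  -- commutation: h ∈ H, g ∈ G₀ ⇒ h (g x) = g (h x)
  have comm : ∀ h ∈ H, ∀ g ∈ G₀, ∀ x : S, h (g x) = g (h x) := by
    intro h hh g hg x
    have hmem : h ∈ Subgroup.centralizer (G : Set (Equiv.Perm S)) := hGH ▸ hh
    have hcomm := (Subgroup.mem_centralizer_iff.mp hmem) g (hG₀ hg)
    calc h (g x) = (h * g) x := rfl
    _ = (g * h) x := by rw [hcomm]
    _ = g (h x) := rfl
  refine ⟨⟨H.one_mem, ⟨1, G₀.one_mem, rfl⟩⟩, ?_, ?_, ?_, ?_⟩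
  · rintro a ⟨ha, g, hg, hgs⟩ b ⟨hb, g', hg', hgs'⟩
    refine ⟨H.mul_mem ha hb, g' * g, G₀.mul_mem hg' hg, ?_⟩
    show g' (g s₀) = a (b s₀)
    rw [← hgs', comm a ha g' hg', hgs]
  · rintro a ⟨ha, g, hg, hgs⟩
    refine ⟨H.inv_mem ha, g⁻¹, G₀.inv_mem hg, ?_⟩
    have key : a (g⁻¹ s₀) = s₀ := by
      have := comm a ha g⁻¹ (G₀.inv_mem hg) s₀
      rw [this, ← hgs]
      simp
    calc g⁻¹ s₀ = a⁻¹ (a (g⁻¹ s₀)) := (a.symm_apply_apply _).symm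
    _ = a⁻¹ s₀ := by rw [key]
  · rintro h ⟨hh, g, hg, hgs⟩ x ⟨g', hg', hgs'⟩
    refine ⟨g' * g, G₀.mul_mem hg' hg, ?_⟩
    show g' (g s₀) = h x
    rw [← hgs', comm h hh g' hg', hgs]
  · rintro x ⟨g₁, hg₁, hgx⟩ y ⟨g₂, hg₂, hgy⟩
    obtain ⟨⟨h, hh⟩, hhx, huniq⟩ := hHst x y
    refine ⟨h, ⟨⟨hh, ?_⟩, hhx⟩, ?_⟩
    · refine ⟨g₁⁻¹ * g₂, G₀.mul_mem (G₀.inv_mem hg₁) hg₂, ?_⟩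
      have hs : h s₀ = g₁⁻¹ (h (g₁ s₀)) := by
        rw [comm h hh g₁ hg₁]
        exact (g₁.symm_apply_apply _).symm
      show g₁⁻¹ (g₂ s₀) = h s₀
      rw [hs, hgx, hhx, ← hgy]
    · rintro h' ⟨⟨hh', -⟩, hx'⟩
      exact congrArg Subtype.val (huniq ⟨h', hh'⟩ hx')
end

section
/- Let G, H ≤ Sym(S) be dual groups in the sense of Lewin, let G₀ be a subgroup of G, let s₀ ∈ S, let S₀ = { g(s₀) : g ∈ G₀ }, and let H₀ = { h ∈ H : h(s₀) ∈ S₀ }. Suppose g : S₀ → S₀ is a bijection of S₀ that commutes with the restriction to S₀ of every element of H₀, i.e. g(h(x)) = h(g(x)) for all h ∈ H₀ and x ∈ S₀. Then there is a unique ĝ ∈ G whose restriction to S₀ equals g, and moreover ĝ ∈ G₀. -/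
/-- With G, H ≤ Sym(S) dual, G₀ ≤ G, S₀ the G₀-orbit of s₀, and
H₀ = { h ∈ H : h(s₀) ∈ S₀ }: if g is a bijection of S₀ commuting on S₀ with every
element of H₀, then g extends uniquely to an element gExt of G, and any such
extension lies in G₀. -/
theorem stmt_13 {S : Type*} (G H : Subgroup (Equiv.Perm S))
    (hGst : ∀ s t : S, ∃! g : G, (g : Equiv.Perm S) s = t)
    (hHst : ∀ s t : S, ∃! h : H, (h : Equiv.Perm S) s = t)
    (hGH : Subgroup.centralizer (G : Set (Equiv.Perm S)) = H)
    (hHG : Subgroup.centralizer (H : Set (Equiv.Perm S)) = G)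
    (G₀ : Subgroup (Equiv.Perm S)) (hG₀ : G₀ ≤ G) (s₀ : S)
    (g : S → S)
    (hbij : Set.BijOn g (orbitSet G₀ s₀) (orbitSet G₀ s₀))
    (hcomm : ∀ h ∈ Hsub H G₀ s₀, ∀ x ∈ orbitSet G₀ s₀, g (h x) = h (g x)) :
    (∃! gExt : Equiv.Perm S, gExt ∈ G ∧ Set.EqOn (gExt : S → S) g (orbitSet G₀ s₀)) ∧
    (∀ gExt : Equiv.Perm S, gExt ∈ G → Set.EqOn (gExt : S → S) g (orbitSet G₀ s₀) → gExt ∈ G₀) := by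
  have hs₀ : s₀ ∈ orbitSet G₀ s₀ := ⟨1, G₀.one_mem, rfl⟩
  have hgs₀ : g s₀ ∈ orbitSet G₀ s₀ := hbij.mapsTo hs₀
  obtain ⟨g₁, hg₁mem, hg₁⟩ := hgs₀
  -- g₁ agrees with g on the orbit
  have hEq : Set.EqOn (g₁ : S → S) g (orbitSet G₀ s₀) := by
    rintro x ⟨g', hg'mem, rfl⟩
    obtain ⟨h, hh, -⟩ := hHst s₀ (g' s₀)
    have hH₀ : (h : Equiv.Perm S) ∈ Hsub H G₀ s₀ :=
      ⟨h.2, hh ▸ ⟨g', hg'mem, rfl⟩⟩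
    have hcom : g₁ * (h : Equiv.Perm S) = (h : Equiv.Perm S) * g₁ := by
      have := (hGH ▸ h.2 : (h : Equiv.Perm S) ∈
        Subgroup.centralizer (G : Set (Equiv.Perm S)))
      exact Subgroup.mem_centralizer_iff.mp this g₁ (hG₀ hg₁mem)
    calc (g₁ : Equiv.Perm S) (g' s₀) = g₁ ((h : Equiv.Perm S) s₀) := by rw [hh]
      _ = (h : Equiv.Perm S) (g₁ s₀) := by
          have := congrArg (fun p : Equiv.Perm S => p s₀) hcom
          simpa using this
      _ = (h : Equiv.Perm S) (g s₀) := by rw [hg₁]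
      _ = g ((h : Equiv.Perm S) s₀) := (hcomm _ hH₀ s₀ hs₀).symm
      _ = g (g' s₀) := by rw [hh]
  -- any extension in G equals g₁
  have key : ∀ gExt : Equiv.Perm S, gExt ∈ G →
      Set.EqOn (gExt : S → S) g (orbitSet G₀ s₀) → gExt = g₁ := by
    intro gExt hmem heq
    obtain ⟨u, -, hu⟩ := hGst s₀ (g s₀)
    have h1 : (⟨gExt, hmem⟩ : G) = (⟨g₁, hG₀ hg₁mem⟩ : G) := by
      rw [hu ⟨gExt, hmem⟩ (heq hs₀), hu ⟨g₁, hG₀ hg₁mem⟩ hg₁]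
    exact congrArg Subtype.val h1
  refine ⟨⟨g₁, ⟨hG₀ hg₁mem, hEq⟩, fun y hy => key y hy.1 hy.2⟩, ?_⟩
  intro gExt hmem heq
  rw [key gExt hmem heq]
  exact hg₁mem
end

section
/- Let G, H ≤ Sym(S) be dual groups in the sense of Lewin, let G₀ be a subgroup of G, let s₀ ∈ S, let S₀ = { g(s₀) : g ∈ G₀ }, and let H₀ = { h ∈ H : h(s₀) ∈ S₀ }. Since every element of G₀ and of H₀ preserves S₀, restriction to S₀ gives injective homomorphisms of G₀ and H₀ into Sym(S₀); denote the images by G₀|_{S₀} and H₀|_{S₀}. Then G₀|_{S₀} and H₀|_{S₀} are dual groups in Sym(S₀): each acts simply transitively on S₀ and each is the centralizer of the other in Sym(S₀). -/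
/-- The image G₀|_{S₀} of G₀ in Sym(S₀) under restriction to S₀. -/
def Gres {S : Type*} (G₀ : Subgroup (Equiv.Perm S)) (s₀ : S) :
    Set (Equiv.Perm (orbitSet G₀ s₀)) :=
  {p | ∃ g ∈ G₀, ∀ x : orbitSet G₀ s₀, (p x : S) = g x}

/-- The image H₀|_{S₀} of H₀ in Sym(S₀) under restriction to S₀. -/
def Hres {S : Type*} (H G₀ : Subgroup (Equiv.Perm S)) (s₀ : S) :
    Set (Equiv.Perm (orbitSet G₀ s₀)) :=
  {p | ∃ h ∈ Hsub H G₀ s₀, ∀ x : orbitSet G₀ s₀, (p x : S) = h x}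

section Aux

variable {S : Type*}

lemma mem_orbit_self (G₀ : Subgroup (Equiv.Perm S)) (s₀ : S) : s₀ ∈ orbitSet G₀ s₀ :=
  ⟨1, G₀.one_mem, rfl⟩

lemma g_maps {G₀ : Subgroup (Equiv.Perm S)} {s₀ : S} {g : Equiv.Perm S} (hg : g ∈ G₀) :
    ∀ x ∈ orbitSet G₀ s₀, g x ∈ orbitSet G₀ s₀ := by
  rintro x ⟨g', hg', rfl⟩
  exact ⟨g * g', G₀.mul_mem hg hg', rfl⟩

lemma g_iff {G₀ : Subgroup (Equiv.Perm S)} {s₀ : S} {g : Equiv.Perm S} (hg : g ∈ G₀) :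
    ∀ x, x ∈ orbitSet G₀ s₀ ↔ g x ∈ orbitSet G₀ s₀ := by
  intro x
  constructor
  · exact g_maps hg x
  · intro hx
    have := g_maps (G₀.inv_mem hg) _ hx
    simpa using this

lemma comm_GH {G H : Subgroup (Equiv.Perm S)}
    (hGH : Subgroup.centralizer (G : Set (Equiv.Perm S)) = H)
    {g h : Equiv.Perm S} (hg : g ∈ G) (hh : h ∈ H) (x : S) : g (h x) = h (g x) := by
  have h1 : h ∈ Subgroup.centralizer (G : Set (Equiv.Perm S)) := hGH ▸ hh
  have h2 := (Subgroup.mem_centralizer_iff.mp h1) g hg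
  have h3 := congrArg (fun p : Equiv.Perm S => p x) h2
  simpa using h3

lemma hsub_of_point {G H : Subgroup (Equiv.Perm S)}
    (hGH : Subgroup.centralizer (G : Set (Equiv.Perm S)) = H)
    {G₀ : Subgroup (Equiv.Perm S)} (hG₀ : G₀ ≤ G) {s₀ : S}
    {h : Equiv.Perm S} (hh : h ∈ H) {x : S} (hx : x ∈ orbitSet G₀ s₀)
    (hhx : h x ∈ orbitSet G₀ s₀) : h ∈ Hsub H G₀ s₀ := by
  obtain ⟨g, hg, rfl⟩ := hx
  refine ⟨hh, ?_⟩
  have h1 : h (g s₀) = g (h s₀) := (comm_GH hGH (hG₀ hg) hh s₀).symm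
  have h2 : g⁻¹ (h (g s₀)) ∈ orbitSet G₀ s₀ := g_maps (G₀.inv_mem hg) _ hhx
  rw [h1] at h2
  simpa using h2

lemma h_maps {G H : Subgroup (Equiv.Perm S)}
    (hGH : Subgroup.centralizer (G : Set (Equiv.Perm S)) = H)
    {G₀ : Subgroup (Equiv.Perm S)} (hG₀ : G₀ ≤ G) {s₀ : S}
    {h : Equiv.Perm S} (hh : h ∈ Hsub H G₀ s₀) :
    ∀ x ∈ orbitSet G₀ s₀, h x ∈ orbitSet G₀ s₀ := by
  rintro x ⟨g, hg, rfl⟩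
  have h1 : h (g s₀) = g (h s₀) := (comm_GH hGH (hG₀ hg) hh.1 s₀).symm
  rw [h1]
  exact g_maps hg _ hh.2

lemma hsub_inv {G H : Subgroup (Equiv.Perm S)}
    (hGH : Subgroup.centralizer (G : Set (Equiv.Perm S)) = H)
    {G₀ : Subgroup (Equiv.Perm S)} (hG₀ : G₀ ≤ G) {s₀ : S}
    {h : Equiv.Perm S} (hh : h ∈ Hsub H G₀ s₀) : h⁻¹ ∈ Hsub H G₀ s₀ := by
  refine ⟨H.inv_mem hh.1, ?_⟩
  obtain ⟨g, hg, hgs⟩ := hh.2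
  have h1 : h⁻¹ (g s₀) = g (h⁻¹ s₀) := (comm_GH hGH (hG₀ hg) (H.inv_mem hh.1) s₀).symm
  have h2 : h⁻¹ (h s₀) = s₀ := by simp
  rw [← hgs] at h2
  rw [h2] at h1
  have h3 : h⁻¹ s₀ = g⁻¹ s₀ := by
    have := congrArg (fun y => g⁻¹ y) h1
    simpa using this.symm
  rw [h3]
  exact ⟨g⁻¹, G₀.inv_mem hg, rfl⟩

lemma h_iff {G H : Subgroup (Equiv.Perm S)}
    (hGH : Subgroup.centralizer (G : Set (Equiv.Perm S)) = H)
    {G₀ : Subgroup (Equiv.Perm S)} (hG₀ : G₀ ≤ G) {s₀ : S}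
    {h : Equiv.Perm S} (hh : h ∈ Hsub H G₀ s₀) :
    ∀ x, x ∈ orbitSet G₀ s₀ ↔ h x ∈ orbitSet G₀ s₀ := by
  intro x
  constructor
  · exact h_maps hGH hG₀ hh x
  · intro hx
    have := h_maps hGH hG₀ (hsub_inv hGH hG₀ hh) _ hx
    simpa using this

end Aux

/-- With G, H ≤ Sym(S) dual, G₀ ≤ G, S₀ the G₀-orbit of s₀, and
H₀ = { h ∈ h : h(s₀) ∈ S₀ }, the restrictions G₀|_{S₀} and H₀|_{S₀} are dual in
Sym(S₀): each acts simply transitively on S₀ and each is the centralizer of the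
other in Sym(S₀). -/
theorem stmt_14 {S : Type*} (G H : Subgroup (Equiv.Perm S))
    (hGst : ∀ s t : S, ∃! g : G, (g : Equiv.Perm S) s = t)
    (hHst : ∀ s t : S, ∃! h : H, (h : Equiv.Perm S) s = t)
    (hGH : Subgroup.centralizer (G : Set (Equiv.Perm S)) = H)
    (hHG : Subgroup.centralizer (H : Set (Equiv.Perm S)) = G)
    (G₀ : Subgroup (Equiv.Perm S)) (hG₀ : G₀ ≤ G) (s₀ : S) :
    (∀ x y : orbitSet G₀ s₀,
      ∃! p : Equiv.Perm (orbitSet G₀ s₀), p ∈ Gres G₀ s₀ ∧ p x = y) ∧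
    (∀ x y : orbitSet G₀ s₀,
      ∃! p : Equiv.Perm (orbitSet G₀ s₀), p ∈ Hres H G₀ s₀ ∧ p x = y) ∧
    ({p : Equiv.Perm (orbitSet G₀ s₀) | ∀ q ∈ Hres H G₀ s₀, p * q = q * p}
       = Gres G₀ s₀) ∧
    ({p : Equiv.Perm (orbitSet G₀ s₀) | ∀ q ∈ Gres G₀ s₀, p * q = q * p}
       = Hres H G₀ s₀) := by
  -- uniqueness helper for Gres
  have Guniq : ∀ (x y : orbitSet G₀ s₀) (p p' : Equiv.Perm (orbitSet G₀ s₀)),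
      p ∈ Gres G₀ s₀ → p x = y → p' ∈ Gres G₀ s₀ → p' x = y → p' = p := by
    rintro x y p p' ⟨g, hg, hp⟩ hpx ⟨g', hg', hp'⟩ hp'x
    obtain ⟨gu, -, hun⟩ := hGst (x : S) (y : S)
    have e1 : (⟨g, hG₀ hg⟩ : G) = gu := hun _ (by
      show g (x : S) = (y : S); rw [← hp x, hpx])
    have e2 : (⟨g', hG₀ hg'⟩ : G) = gu := hun _ (by
      show g' (x : S) = (y : S); rw [← hp' x, hp'x])
    have egg : g' = g := congrArg Subtype.val (e2.trans e1.symm)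
    ext r
    rw [hp r, hp' r, egg]
  have Huniq : ∀ (x y : orbitSet G₀ s₀) (p p' : Equiv.Perm (orbitSet G₀ s₀)),
      p ∈ Hres H G₀ s₀ → p x = y → p' ∈ Hres H G₀ s₀ → p' x = y → p' = p := by
    rintro x y p p' ⟨h, hh, hp⟩ hpx ⟨h', hh', hp'⟩ hp'x
    obtain ⟨hu, -, hun⟩ := hHst (x : S) (y : S)
    have e1 : (⟨h, hh.1⟩ : H) = hu := hun _ (by
      show h (x : S) = (y : S); rw [← hp x, hpx])
    have e2 : (⟨h', hh'.1⟩ : H) = hu := hun _ (by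
      show h' (x : S) = (y : S); rw [← hp' x, hp'x])
    have ehh : h' = h := congrArg Subtype.val (e2.trans e1.symm)
    ext r
    rw [hp r, hp' r, ehh]
  refine ⟨?_, ?_, ?_, ?_⟩
  · -- Gres simply transitive
    rintro ⟨x, g₁, hg₁, hx⟩ ⟨y, g₂, hg₂, hy⟩
    have hg : g₂ * g₁⁻¹ ∈ G₀ := G₀.mul_mem hg₂ (G₀.inv_mem hg₁)
    refine ⟨(g₂ * g₁⁻¹).subtypePerm (p := (· ∈ orbitSet G₀ s₀)) (fun x => (g_iff hg x).symm), ⟨⟨g₂ * g₁⁻¹, hg, fun x => rfl⟩, ?_⟩, ?_⟩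
    · apply Subtype.ext
      show (g₂ * g₁⁻¹) x = y
      rw [← hx, ← hy]; simp
    · rintro p' ⟨hp'mem, hp'x⟩
      exact Guniq _ _ _ p' ⟨g₂ * g₁⁻¹, hg, fun x => rfl⟩ (by
        apply Subtype.ext
        show (g₂ * g₁⁻¹) x = y
        rw [← hx, ← hy]; simp) hp'mem hp'x
  · -- Hres simply transitive
    intro x y
    obtain ⟨⟨h, hhH⟩, hhval, -⟩ := hHst (x : S) (y : S)
    have hh : h ∈ Hsub H G₀ s₀ := hsub_of_point hGH hG₀ hhH x.2 (by rw [hhval]; exact y.2)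
    refine ⟨h.subtypePerm (p := (· ∈ orbitSet G₀ s₀)) (fun x => (h_iff hGH hG₀ hh x).symm), ⟨⟨h, hh, fun x => rfl⟩, Subtype.ext hhval⟩, ?_⟩
    rintro p' ⟨hp'mem, hp'x⟩
    exact Huniq _ _ _ p' ⟨h, hh, fun x => rfl⟩ (Subtype.ext hhval) hp'mem hp'x
  · -- centralizer of Hres = Gres
    ext p
    simp only [Set.mem_setOf_eq]
    constructor
    · intro hp
      set s₀el : orbitSet G₀ s₀ := ⟨s₀, mem_orbit_self G₀ s₀⟩ with hs₀el
      obtain ⟨g, hg, hgy⟩ := (p s₀el).2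
      refine ⟨g, hg, ?_⟩
      intro x
      obtain ⟨⟨h, hhH⟩, hhval, -⟩ := hHst s₀ (x : S)
      have hh : h ∈ Hsub H G₀ s₀ := ⟨hhH, by rw [hhval]; exact x.2⟩
      set q := h.subtypePerm (p := (· ∈ orbitSet G₀ s₀)) (fun x => (h_iff hGH hG₀ hh x).symm) with hq
      have hqmem : q ∈ Hres H G₀ s₀ := ⟨h, hh, fun x => rfl⟩
      have hqs : q s₀el = x := Subtype.ext hhval
      have hcomm := hp q hqmem
      have h1 : p x = q (p s₀el) := by
        rw [← hqs]
        exact congrArg (fun r : Equiv.Perm (orbitSet G₀ s₀) => r s₀el) hcomm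
      have h2 : (q (p s₀el) : S) = h (p s₀el : S) := rfl
      have hhval' : h s₀ = (x : S) := hhval
      rw [h1, h2, ← hgy, ← comm_GH hGH (hG₀ hg) hhH s₀, hhval']
    · rintro ⟨g, hg, hgp⟩ q ⟨h, hh, hhq⟩
      ext r
      show ((p (q r)) : S) = ((q (p r)) : S)
      rw [hgp (q r), hhq r, hhq (p r), hgp r]
      exact comm_GH hGH (hG₀ hg) hh.1 (r : S)
  · -- centralizer of Gres = Hres
    ext p
    simp only [Set.mem_setOf_eq]
    constructor
    · intro hp
      set s₀el : orbitSet G₀ s₀ := ⟨s₀, mem_orbit_self G₀ s₀⟩ with hs₀el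
      obtain ⟨⟨h, hhH⟩, hhval, -⟩ := hHst s₀ ((p s₀el : S))
      have hh : h ∈ Hsub H G₀ s₀ := ⟨hhH, by rw [hhval]; exact (p s₀el).2⟩
      refine ⟨h, hh, ?_⟩
      intro x
      obtain ⟨g, hg, hgs⟩ := x.2
      set q := g.subtypePerm (p := (· ∈ orbitSet G₀ s₀)) (fun x => (g_iff hg x).symm) with hq
      have hqmem : q ∈ Gres G₀ s₀ := ⟨g, hg, fun x => rfl⟩
      have hqs : q s₀el = x := Subtype.ext hgs
      have hcomm := hp q hqmem
      have h1 : p x = q (p s₀el) := by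
        rw [← hqs]
        exact congrArg (fun r : Equiv.Perm (orbitSet G₀ s₀) => r s₀el) hcomm
      have h2 : (q (p s₀el) : S) = g (p s₀el : S) := rfl
      have hhval' : h s₀ = (p s₀el : S) := hhval
      rw [h1, h2, ← hhval', comm_GH hGH (hG₀ hg) hhH s₀, hgs]
    · rintro ⟨h, hh, hhp⟩ q ⟨g, hg, hgq⟩
      ext r
      show ((p (q r)) : S) = ((q (p r)) : S)
      rw [hhp (q r), hgq r, hgq (p r), hhp r]
      exact (comm_GH hGH (hG₀ hg) hh.1 (r : S)).symm
end

section
/- Fix integers m ≥ 1 and n ≥ 1. Each contextual inversion J^{q,r} (for q, r ∈ {1, …, n}) is an involution, hence a permutation of (ℤ/mℤ)ⁿ. Let G₀ be the subgroup of Sym((ℤ/mℤ)ⁿ) generated by the contextual inversions { J^{q,r} : q, r ∈ {1, …, n} }. Then for every affine map f : ℤ/mℤ → ℤ/mℤ, f(z) = az + b, applied componentwise, and for every g ∈ G₀, one has f ∘ g(Y) = g ∘ f(Y) for all Y ∈ (ℤ/mℤ)ⁿ. -/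
/-- The contextual inversion J^{q,r} on pitch-class segments Y ∈ (ℤ/mℤ)ⁿ, sending
Y to the tuple with i-th entry −y_i + y_q + y_r. -/
def Jqr (m n : ℕ) (q r : Fin n) (Y : Fin n → ZMod m) : Fin n → ZMod m :=
  fun i => -(Y i) + Y q + Y r

/-- Each contextual inversion J^{q,r} is an involution (hence a
permutation of (ℤ/mℤ)ⁿ), and every element of the subgroup of Sym((ℤ/mℤ)ⁿ)
generated by the contextual inversions commutes with every componentwise affine
map f(z) = az + b. -/
theorem stmt_16 (m n : ℕ) (hm : 1 ≤ m) (hn : 1 ≤ n) :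
    (∀ q r : Fin n, Function.Involutive (Jqr m n q r)) ∧
    (∀ a b : ZMod m,
      ∀ g ∈ Subgroup.closure {p : Equiv.Perm (Fin n → ZMod m) |
          ∃ q r : Fin n, (p : (Fin n → ZMod m) → (Fin n → ZMod m)) = Jqr m n q r},
        ∀ Y : Fin n → ZMod m,
          (fun i => a * (g Y) i + b) = g (fun i => a * Y i + b)) := by
  constructor
  · intro q r Y
    funext i
    simp only [Jqr]
    ring
  · intro a b g hg
    induction hg using Subgroup.closure_induction with
    | mem p hp =>
      obtain ⟨q, r, hp⟩ := hp
      intro Y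
      rw [hp]
      funext i
      simp only [Jqr]
      ring
    | one => intro Y; rfl
    | mul x y hx hy ihx ihy =>
      intro Y
      simp only [Equiv.Perm.mul_apply]
      rw [ihx, ihy]
    | inv x hx ih =>
      intro Y
      apply x.injective
      have := ih (x⁻¹ Y)
      rw [show x (x⁻¹ Y) = Y by simp] at this
      rw [← this]
      simp
end

section
/- In ℤ/12ℤ, let O₀₁ = {0, 1, 3, 4, 6, 7, 9, 10} (an octatonic set) and let G₀ = { T₀, T₃, T₆, T₉, I₇, I₁₀, I₁, I₄ } ≤ Sym(ℤ/12ℤ), where T_k(x) = x + k and I_k(x) = −x + k; G₀ is the set-wise stabilizer of O₀₁ in the T/I-group. Then for every 3-element subset X of O₀₁, no nontrivial element of G₀ fixes X as a set, and consequently G₀ acts simply transitively on the orbit G₀X = { g(X) : g ∈ G₀ }: for all Y, Z ∈ G₀X there is a unique g ∈ G₀ with g(Y) = Z. -/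
/-- The transposition T_k : x ↦ x + k on ℤ/12ℤ. -/
def Tr (k : ZMod 12) : Equiv.Perm (ZMod 12) := Equiv.addRight k

/-- The inversion I_k : x ↦ −x + k on ℤ/12ℤ. -/
def Inv12 (k : ZMod 12) : Equiv.Perm (ZMod 12) :=
  (Equiv.neg (ZMod 12)).trans (Equiv.addRight k)

/-- The octatonic set O₀₁ = {0, 1, 3, 4, 6, 7, 9, 10} in ℤ/12ℤ. -/
def O01 : Set (ZMod 12) := {0, 1, 3, 4, 6, 7, 9, 10}

/-- The set-wise stabilizer G₀ = {T₀, T₃, T₆, T₉, I₇, I₁₀, I₁, I₄} of O₀₁. -/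
def G0 : Set (Equiv.Perm (ZMod 12)) :=
  {Tr 0, Tr 3, Tr 6, Tr 9, Inv12 7, Inv12 10, Inv12 1, Inv12 4}

lemma mem_G0_iff (g : Equiv.Perm (ZMod 12)) :
    g ∈ G0 ↔ g = Tr 0 ∨ g = Tr 3 ∨ g = Tr 6 ∨ g = Tr 9 ∨
      g = Inv12 7 ∨ g = Inv12 10 ∨ g = Inv12 1 ∨ g = Inv12 4 := by
  simp [G0, Set.mem_insert_iff]

lemma G0_mul {a b : Equiv.Perm (ZMod 12)} (ha : a ∈ G0) (hb : b ∈ G0) : a * b ∈ G0 := by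
  rw [mem_G0_iff] at *
  rcases ha with rfl|rfl|rfl|rfl|rfl|rfl|rfl|rfl <;>
    rcases hb with rfl|rfl|rfl|rfl|rfl|rfl|rfl|rfl <;> decide

lemma G0_inv {a : Equiv.Perm (ZMod 12)} (ha : a ∈ G0) : a⁻¹ ∈ G0 := by
  rw [mem_G0_iff] at *
  rcases ha with rfl|rfl|rfl|rfl|rfl|rfl|rfl|rfl <;> decide

/-- A fixed-point-free involution on X cannot fix a 3-element set. -/
lemma invol_aux (h : Equiv.Perm (ZMod 12)) (X : Set (ZMod 12))
    (h2 : ∀ x, h (h x) = x) (hfp : ∀ x ∈ X, h x ≠ x)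
    (himg : h '' X = X) (h3 : X.ncard = 3) : False := by
  obtain ⟨a, b, c, hab, hac, hbc, rfl⟩ := Set.ncard_eq_three.mp h3
  have mem : ∀ x ∈ ({a, b, c} : Set (ZMod 12)),
      h x ∈ ({a, b, c} : Set (ZMod 12)) := by
    intro x hx
    rw [← himg]; exact ⟨x, hx, rfl⟩
  have ha := mem a (by simp)
  have hb := mem b (by simp)
  have hc := mem c (by simp)
  simp only [Set.mem_insert_iff, Set.mem_singleton_iff] at ha hb hc
  have hfa := hfp a (by simp)
  have hfb := hfp b (by simp)
  have hfc := hfp c (by simp)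
  rcases ha with ha | ha | ha
  · exact hfa ha
  · -- h a = b, so h b = a
    have hba : h b = a := by rw [← ha, h2]
    rcases hc with hc | hc | hc
    · exact hbc (h.injective (hba.trans hc.symm))
    · exact hac (h.injective (ha.trans hc.symm))
    · exact hfc hc
  · -- h a = c, so h c = a
    have hca : h c = a := by rw [← ha, h2]
    rcases hb with hb | hb | hb
    · exact hbc (h.injective (hca.trans hb.symm)).symm
    · exact hfb hb
    · exact hab (h.injective (ha.trans hb.symm))

lemma mem_O01_iff (x : ZMod 12) :
    x ∈ O01 ↔ x = 0 ∨ x = 1 ∨ x = 3 ∨ x = 4 ∨ x = 6 ∨ x = 7 ∨ x = 9 ∨ x = 10 := by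
  simp [O01, Set.mem_insert_iff]

lemma stab (X : Set (ZMod 12)) (hX : X ⊆ O01) (h3 : X.ncard = 3) :
    ∀ g ∈ G0, g '' X = X → g = 1 := by
  have hfp6 : ∀ x : ZMod 12, Tr 6 x ≠ x := by decide
  have key : ∀ g ∈ G0, g ≠ Tr 0 → g '' X ≠ X := by
    intro g hg hg1 himg
    have hsq : (g * g) '' X = X := by
      rw [Equiv.Perm.coe_mul, Set.image_comp, himg, himg]
    rw [mem_G0_iff] at hg
    rcases hg with rfl|rfl|rfl|rfl|rfl|rfl|rfl|rfl
    · exact hg1 rfl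
    · -- Tr 3 : Tr 3 * Tr 3 = Tr 6, a fixed-point-free involution
      have h6 : Tr 3 * Tr 3 = Tr 6 := by decide
      rw [h6] at hsq
      exact invol_aux (Tr 6) X (by decide) (fun x _ => hfp6 x) hsq h3
    · exact invol_aux (Tr 6) X (by decide) (fun x _ => hfp6 x) himg h3
    · have h6 : Tr 9 * Tr 9 = Tr 6 := by decide
      rw [h6] at hsq
      exact invol_aux (Tr 6) X (by decide) (fun x _ => hfp6 x) hsq h3
    · have hfp : ∀ x : ZMod 12, (x = 0 ∨ x = 1 ∨ x = 3 ∨ x = 4 ∨ x = 6 ∨ x = 7 ∨ x = 9 ∨ x = 10) → Inv12 7 x ≠ x := by decide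
      exact invol_aux _ X (by decide) (fun x hx => hfp x ((mem_O01_iff x).mp (hX hx))) himg h3
    · have hfp : ∀ x : ZMod 12, (x = 0 ∨ x = 1 ∨ x = 3 ∨ x = 4 ∨ x = 6 ∨ x = 7 ∨ x = 9 ∨ x = 10) → Inv12 10 x ≠ x := by decide
      exact invol_aux _ X (by decide) (fun x hx => hfp x ((mem_O01_iff x).mp (hX hx))) himg h3
    · have hfp : ∀ x : ZMod 12, (x = 0 ∨ x = 1 ∨ x = 3 ∨ x = 4 ∨ x = 6 ∨ x = 7 ∨ x = 9 ∨ x = 10) → Inv12 1 x ≠ x := by decide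
      exact invol_aux _ X (by decide) (fun x hx => hfp x ((mem_O01_iff x).mp (hX hx))) himg h3
    · have hfp : ∀ x : ZMod 12, (x = 0 ∨ x = 1 ∨ x = 3 ∨ x = 4 ∨ x = 6 ∨ x = 7 ∨ x = 9 ∨ x = 10) → Inv12 4 x ≠ x := by decide
      exact invol_aux _ X (by decide) (fun x hx => hfp x ((mem_O01_iff x).mp (hX hx))) himg h3
  intro g hg himg
  have : g = Tr 0 := by
    by_contra hne
    exact key g hg hne himg
  rw [this]; decide

/-- Every 3-element subset X of the octatonic O₀₁ is fixed by no
nontrivial element of G₀, and consequently G₀ acts simply transitively on the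
orbit G₀X. -/
theorem stmt_18 :
    ∀ X : Set (ZMod 12), X ⊆ O01 → X.ncard = 3 →
      (∀ g ∈ G0, g '' X = X → g = 1) ∧
      (∀ Y ∈ {Y : Set (ZMod 12) | ∃ g ∈ G0, g '' X = Y},
       ∀ Z ∈ {Y : Set (ZMod 12) | ∃ g ∈ G0, g '' X = Y},
         ∃! g : Equiv.Perm (ZMod 12), g ∈ G0 ∧ g '' Y = Z) := by
  intro X hX h3
  have htriv := stab X hX h3
  refine ⟨htriv, ?_⟩
  rintro Y ⟨g1, hg1, rfl⟩ Z ⟨g2, hg2, rfl⟩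
  have himginv : ∀ (g : Equiv.Perm (ZMod 12)) (S : Set (ZMod 12)),
      (g⁻¹ : Equiv.Perm (ZMod 12)) '' (g '' S) = S := by
    intro g S
    rw [Equiv.Perm.inv_def]
    exact Equiv.symm_image_image g S
  refine ⟨g2 * g1⁻¹, ⟨G0_mul hg2 (G0_inv hg1), ?_⟩, ?_⟩
  · rw [Equiv.Perm.coe_mul, Set.image_comp, himginv]
  · rintro g ⟨hg, himg⟩
    have hw : (g2⁻¹ * g * g1) '' X = X := by
      have h5 : (g2⁻¹ : Equiv.Perm (ZMod 12)) '' (g '' (g1 '' X)) =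
          (g2⁻¹ : Equiv.Perm (ZMod 12)) '' (g2 '' X) := by rw [himg]
      rw [himginv] at h5
      rw [Equiv.Perm.coe_mul, Equiv.Perm.coe_mul, Set.image_comp, Set.image_comp]
      exact h5
    have hmem : g2⁻¹ * g * g1 ∈ G0 := G0_mul (G0_mul (G0_inv hg2) hg) hg1
    have h1 : g2⁻¹ * g * g1 = 1 := htriv _ hmem hw
    have h2 := congrArg (fun w => g2 * w * g1⁻¹) h1
    simpa [mul_assoc] using h2
end

section
/- Let a, b, c ∈ ℤ/12ℤ be pairwise distinct and suppose there exists i ∈ ℤ/12ℤ with i ≠ 0 such that {a + i, b + i, c + i} = {a, b, c} as sets. Then there exists k ∈ ℤ/12ℤ with {a, b, c} = {k, k + 4, k + 8}; in particular, i = 4 or i = 8. -/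
/-- If a 3-element subset {a, b, c} of ℤ/12ℤ is fixed by a nontrivial
translation by i, then {a, b, c} = {k, k+4, k+8} for some k; in particular i = 4
or i = 8. -/
theorem stmt_19 (a b c i : ZMod 12) (hab : a ≠ b) (hac : a ≠ c) (hbc : b ≠ c)
    (hi : i ≠ 0)
    (h : ({a + i, b + i, c + i} : Set (ZMod 12)) = {a, b, c}) :
    (∃ k : ZMod 12, ({a, b, c} : Set (ZMod 12)) = {k, k + 4, k + 8}) ∧
    (i = 4 ∨ i = 8) := by
  have key : ∀ j : ZMod 12, j ≠ 0 → j + j + j = 0 → j = 4 ∨ j = 8 := by decide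
  have e44 : (4 + 4 : ZMod 12) = 8 := by decide
  have e88 : (8 + 8 : ZMod 12) = 4 := by decide
  have hmem : ∀ x : ZMod 12, x = a ∨ x = b ∨ x = c → x + i = a ∨ x + i = b ∨ x + i = c := by
    intro x hx
    have : x + i ∈ ({a + i, b + i, c + i} : Set (ZMod 12)) := by
      rcases hx with rfl | rfl | rfl <;> simp
    rw [h] at this
    simpa using this
  have hne : ∀ x : ZMod 12, x + i ≠ x := fun x hx => hi (by
    have := hx; rwa [add_eq_left] at this)
  have hA := hmem a (Or.inl rfl)
  have hB := hmem b (Or.inr (Or.inl rfl))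
  have hC := hmem c (Or.inr (Or.inr rfl))
  rcases hA with hA | hA | hA
  · exact absurd hA (hne a)
  · -- a + i = b
    rcases hB with hB | hB | hB
    · -- b + i = a ; then c + i must equal c, contradiction
      rcases hC with hC | hC | hC
      · exact absurd (by rw [← hB] at hC; exact add_right_cancel hC) hbc.symm
      · exact absurd (by rw [← hA] at hC; exact add_right_cancel hC) hac.symm
      · exact absurd hC (hne c)
    · exact absurd (add_right_cancel (hA.trans hB.symm)) hab
    · -- b + i = c
      have hC' : c + i = a := by
        rcases hC with hC | hC | hC
        · exact hC
        · exact absurd (add_right_cancel (hA.trans hC.symm)) hac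
        · exact absurd hC (hne c)
      have h3 : i + i + i = 0 := by
        have : a + (i + i + i) = a + 0 := by rw [add_zero]; linear_combination hA + hB + hC'
        exact add_left_cancel this
      have hi48 : i = 4 ∨ i = 8 := key i hi h3
      refine ⟨⟨a, ?_⟩, hi48⟩
      have hb : b = a + i := hA.symm
      have hc : c = a + i + i := by rw [hA, hB]
      clear key hmem hne h hA hB hC' hC h3 hab hac hbc hi
      subst hb; subst hc
      rcases hi48 with rfl | rfl
      · rw [add_assoc a 4 4, e44]
      · rw [add_assoc a 8 8, e88, Set.pair_comm]
  · -- a + i = c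
    rcases hB with hB | hB | hB
    · -- b + i = a : cycle a -> c, b -> a, so c -> b
      have hC' : c + i = b := by
        rcases hC with hC | hC | hC
        · exact absurd (add_right_cancel (hC.trans hB.symm)) hbc.symm
        · exact hC
        · exact absurd hC (hne c)
      have h3 : i + i + i = 0 := by
        have : a + (i + i + i) = a + 0 := by rw [add_zero]; linear_combination hA + hC' + hB
        exact add_left_cancel this
      have hi48 : i = 4 ∨ i = 8 := key i hi h3
      refine ⟨⟨a, ?_⟩, hi48⟩
      have hc : c = a + i := hA.symm
      have hb : b = a + i + i := by rw [hA, hC']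
      clear key hmem hne h hA hB hC' hC h3 hab hac hbc hi
      subst hb; subst hc
      rcases hi48 with rfl | rfl
      · rw [add_assoc a 4 4, e44, Set.pair_comm]
      · rw [add_assoc a 8 8, e88]
    · exact absurd hB (hne b)
    · exact absurd (add_right_cancel (hA.trans hB.symm)) hab
end
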